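/- Let a > 0, c > 0 with R = 2c, and let x, y, α ∈ ℝ. Set d_K(x,y,α) = x·(2c + 2c·cos α) + y·2c·sin α + 2a² − 2c² − 2c² − 4c²cos α. If d_K(x,y,α) = 0 and the derivative of α ↦ d_K(x,y,α) vanishes at α, then x = (c/(2a²))·y² − a²/(2c) + 2c. (When the foci circle passes through the Kepler center, i.e. R = 2c, the envelope of the family of directrices of the Kepler flight ellipses is a parabolic arc with focus at F' = (2c,0).) -/

import Mathlib

/-- **Parabolic envelope of the directrices when the foci circle passes through the
Kepler center (`R = 2c`).**  For the family
`d_K(x,y,α) = x(2c + 2c cos α) + y·2c sin α + 2a² − 2c² − 2c² − 4c² cos α`,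
if `d_K(x,y,α) = 0` and `∂d_K/∂α (x,y,α) = 0`, then
`x = (c/(2a²))y² − a²/(2c) + 2c`: the envelope of the directrices is a parabolic arc
with focus at `F' = (2c, 0)`. -/
theorem kepler_directrix_envelope_parabolic
    (a c : ℝ) (ha : 0 < a) (hc : 0 < c) (x y α : ℝ)
    (dK : ℝ → ℝ)
    (hdK : ∀ β, dK β = x * (2 * c + 2 * c * Real.cos β) + y * (2 * c * Real.sin β)
      + 2 * a ^ 2 - 2 * c ^ 2 - 2 * c ^ 2 - 4 * c ^ 2 * Real.cos β)
    (h0 : dK α = 0)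
    (hd : deriv dK α = 0) :
    x = (c / (2 * a ^ 2)) * y ^ 2 - a ^ 2 / (2 * c) + 2 * c := by
  have hfun : dK = fun β => x * (2 * c + 2 * c * Real.cos β) + y * (2 * c * Real.sin β)
      + 2 * a ^ 2 - 2 * c ^ 2 - 2 * c ^ 2 - 4 * c ^ 2 * Real.cos β := funext hdK
  rw [hfun] at h0 hd
  have hderivat : HasDerivAt (fun β => x * (2 * c + 2 * c * Real.cos β)
      + y * (2 * c * Real.sin β)
      + 2 * a ^ 2 - 2 * c ^ 2 - 2 * c ^ 2 - 4 * c ^ 2 * Real.cos β)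
      (-(x * (2 * c * Real.sin α)) + y * (2 * c * Real.cos α) + 4 * c ^ 2 * Real.sin α) α := by
    have hcd : HasDerivAt Real.cos (-Real.sin α) α := Real.hasDerivAt_cos α
    have hsd : HasDerivAt Real.sin (Real.cos α) α := Real.hasDerivAt_sin α
    have h := (((((hcd.const_mul (2*c)).const_add (2*c)).const_mul x).add
      ((hsd.const_mul (2*c)).const_mul y)).add_const (2*a^2)).sub_const (2*c^2)
    have h2 := (h.sub_const (2*c^2)).sub (hcd.const_mul (4*c^2))
    refine h2.congr_deriv ?_
    ring
  rw [hderivat.deriv] at hd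
  set s := Real.sin α with hs
  set co := Real.cos α with hco
  have hpyth : s ^ 2 + co ^ 2 = 1 := Real.sin_sq_add_cos_sq α
  have e1 : c * (x - 2*c) + c * (x - 2*c) * co + c * y * s + a ^ 2 = 0 := by
    linear_combination h0 / 2
  have e2' : (2*c) * ((x - 2*c) * s) = (2*c) * (y * co) := by linear_combination -hd
  have h2c : (2:ℝ) * c ≠ 0 := by positivity
  have e2 : (x - 2*c) * s = y * co := mul_left_cancel₀ h2c e2'
  have eco : ((x - 2*c)^2 + y^2) * (c * co) = -(x - 2*c) * (a^2 + c*(x - 2*c)) := by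
    linear_combination (x - 2*c) * e1 - c * y * e2
  have es : ((x - 2*c)^2 + y^2) * (c * s) = -y * (a^2 + c*(x - 2*c)) := by
    linear_combination y * e1 + c * (x - 2*c) * e2
  have hP : (x - 2*c)^2 + y^2 ≠ 0 := by
    intro h
    have hu0 : x - 2*c = 0 := by
      have h1 : (x - 2*c)^2 = 0 := by nlinarith [sq_nonneg (x - 2*c), sq_nonneg y]
      exact pow_eq_zero_iff (n := 2) (by norm_num) |>.mp h1
    have hy0 : y = 0 := by
      have h1 : y^2 = 0 := by nlinarith [sq_nonneg (x - 2*c), sq_nonneg y]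
      exact pow_eq_zero_iff (n := 2) (by norm_num) |>.mp h1
    have : a ^ 2 = 0 := by linear_combination e1 - c * s * hy0 - c * (1 + co) * hu0
    exact absurd this (by positivity)
  have key : c^2 * ((x - 2*c)^2 + y^2) = (a^2 + c*(x - 2*c))^2 := by
    have h2 : ((x - 2*c)^2 + y^2) * (c^2 * ((x - 2*c)^2 + y^2)) =
        ((x - 2*c)^2 + y^2) * ((a^2 + c*(x - 2*c))^2) := by
      linear_combination (-(((x - 2*c)^2 + y^2)^2 * c^2)) * hpyth
        + (((x - 2*c)^2 + y^2) * (c * co) - (x - 2*c) * (a^2 + c*(x - 2*c))) * eco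
        + (((x - 2*c)^2 + y^2) * (c * s) - y * (a^2 + c*(x - 2*c))) * es
    exact mul_left_cancel₀ hP h2
  have ha2 : (2:ℝ) * a^2 ≠ 0 := by positivity
  field_simp
  linear_combination (-1 : ℝ) * key
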